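/- Let a, b, c ∈ ℂ satisfy |a| = 1, conj(a)·b + conj(b) = 0 and |c|²·e^{|b|²} = 1, let A, B ∈ ℂ, C ∈ ℂ \ {0}, and D = aB − bA + b. Set ψ(z) = C·e^{Dz}, φ(z) = Az + B, ψ̂(z) = conj(C)·e^{conj(B)·z}, φ̂(z) = conj(A)·z + conj(D). Then for every function f : ℂ → ℂ and every z ∈ ℂ one has C_{a,b,c}(ψ·((C_{a,b,c}f)∘φ))(z) = ψ̂(z)·f(φ̂(z)); that is, C_{a,b,c} E(ψ,φ) C_{a,b,c} = E(ψ̂,φ̂). -/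

import Mathlib

open Complex ComplexConjugate

/-- `C_{a,b,c} E(ψ,φ) C_{a,b,c} = E(ψ̂,φ̂)` where `(C_{a,b,c}f)(z) =
c e^{bz} conj(f(conj(az + b)))`, `ψ(z) = C e^{Dz}`, `φ(z) = Az + B`, `D = aB - bA + b`,
`ψ̂(z) = C̄ e^{B̄z}`, `φ̂(z) = Āz + D̄`. -/
theorem cabc_conjugation_identity (a b c : ℂ) (ha : ‖a‖ = 1)
    (hab : conj a * b + conj b = 0) (hc : ‖c‖ ^ 2 * Real.exp (‖b‖ ^ 2) = 1)
    (A B C : ℂ) (hC : C ≠ 0) (D : ℂ) (hD : D = a * B - b * A + b)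
    (ψ φ ψh φh : ℂ → ℂ)
    (hψ : ∀ z : ℂ, ψ z = C * Complex.exp (D * z))
    (hφ : ∀ z : ℂ, φ z = A * z + B)
    (hψh : ∀ z : ℂ, ψh z = conj C * Complex.exp (conj B * z))
    (hφh : ∀ z : ℂ, φh z = conj A * z + conj D)
    (Cabc : (ℂ → ℂ) → (ℂ → ℂ))
    (hCabc : ∀ (f : ℂ → ℂ) (z : ℂ), Cabc f z = c * Complex.exp (b * z) * conj (f (conj (a * z + b)))) :
    ∀ (f : ℂ → ℂ) (z : ℂ),
      Cabc (fun w => ψ w * (Cabc f) (φ w)) z = ψh z * f (φh z) := by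
  intro f z
  have h1 : conj a * a = 1 := by
    have h := Complex.mul_conj a
    rw [Complex.normSq_eq_norm_sq, ha] at h
    push_cast at h
    linear_combination h
  have h3 : a * conj b = -b := by
    have h := congrArg conj hab
    simp only [map_add, map_mul, Complex.conj_conj, map_zero] at h
    linear_combination h
  have h4 : c * conj c * Complex.exp (conj b * b) = 1 := by
    have hb : conj b * b = ((‖b‖ ^ 2 : ℝ) : ℂ) := by
      rw [mul_comm, Complex.mul_conj, Complex.sq_norm]
    have hcc : c * conj c = ((‖c‖ ^ 2 : ℝ) : ℂ) := by
      rw [Complex.mul_conj, Complex.sq_norm]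
    rw [hb, hcc, ← Complex.ofReal_exp, ← Complex.ofReal_mul, hc, Complex.ofReal_one]
  simp only [hCabc, hψ, hφ, hψh, hφh, map_mul, Complex.conj_conj]
  have harg : conj (a * (A * conj (a * z + b) + B) + b) = conj A * z + conj D := by
    simp only [map_add, map_mul, Complex.conj_conj, hD, map_sub]
    linear_combination conj A * z * h1 + conj A * hab
  rw [harg]
  rw [← Complex.exp_conj, ← Complex.exp_conj]
  simp only [map_mul, map_add, Complex.conj_conj]
  have hexp : b * z + (conj D * (a * z + b) + conj b * (conj A * (a * z + b) + conj B))
      = conj B * z + conj b * b := by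
    simp only [hD, map_sub, map_add, map_mul]
    linear_combination conj B * z * h1 + conj B * hab + z * h3
  calc c * Complex.exp (b * z) * (conj C * Complex.exp (conj D * (a * z + b)) *
        (conj c * Complex.exp (conj b * (conj A * (a * z + b) + conj B)) * f (conj A * z + conj D)))
      = (c * conj c * Complex.exp (b * z + (conj D * (a * z + b) + conj b * (conj A * (a * z + b) + conj B)))) * (conj C * f (conj A * z + conj D)) := by
        rw [Complex.exp_add, Complex.exp_add]; ring
    _ = (c * conj c * Complex.exp (conj b * b)) * (conj C * Complex.exp (conj B * z) * f (conj A * z + conj D)) := by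
        rw [hexp, Complex.exp_add]; ring
    _ = conj C * Complex.exp (conj B * z) * f (conj A * z + conj D) := by
        rw [h4, one_mul]
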